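/- arXiv:1408.1863 — 2 statements merged into one kernel-verified Lean document; each statement's English description precedes it below -/
import Mathlib

section
/- Let d ≥ 2, let B be a nonnegative measurable collision kernel, and let f : ℝ^d → [0,∞) be measurable. Assume that the function (v, v_*, σ) ↦ B(cos θ, |v−v_*|) f(v) f(v_*) is integrable on ℝ^d × ℝ^d × S^{d−1} (which, by the pre–post-collisional change of variables, makes the gain term integrable as well). Then the collision operator conserves mass: ∫_{ℝ^d} Q(f,f)(v) dv = 0. -/
open MeasureTheory Metric Real
open scoped InnerProductSpace

noncomputable section

/-- Velocity space ℝ^d. -/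
abbrev Vel (d : ℕ) := EuclideanSpace ℝ (Fin d)

/-- Surface measure on the unit sphere of ℝ^d. -/
def sphereMeasure (d : ℕ) : Measure (sphere (0 : Vel d) 1) :=
  (volume : Measure (Vel d)).toSphere

/-- The Boltzmann bilinear collision operator on ℝ^d, with collision kernel
`B = B(cos θ, |v−v_*|)`. -/
def collOp (d : ℕ) (B : ℝ → ℝ → ℝ) (f g : Vel d → ℝ) (v : Vel d) : ℝ :=
  ∫ vs : Vel d, ∫ σ : sphere (0 : Vel d) 1,
    B (⟪(σ : Vel d), v - vs⟫_ℝ / ‖v - vs‖) ‖v - vs‖ *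
      (f ((2 : ℝ)⁻¹ • (v + vs) - (‖v - vs‖ / 2) • (σ : Vel d)) *
         g ((2 : ℝ)⁻¹ • (v + vs) + (‖v - vs‖ / 2) • (σ : Vel d))
        - f vs * g v)
    ∂(sphereMeasure d) ∂volume

section AuxCollision
open Set

instance (d : ℕ) : IsFiniteMeasure (sphereMeasure d) := by
  unfold sphereMeasure; infer_instance

lemma mp_lin (d : ℕ) :
    MeasurePreserving (fun p : Vel d × Vel d => ((2:ℝ)⁻¹ • (p.1 + p.2), p.1 - p.2))
      ((volume : Measure (Vel d)).prod volume) ((volume : Measure (Vel d)).prod volume) := by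
  have h1 := measurePreserving_sub_prod (volume : Measure (Vel d)) volume
  have h2 : MeasurePreserving (fun p : Vel d × Vel d => (p.1, p.2 + (2:ℝ)⁻¹ • p.1))
      ((volume : Measure (Vel d)).prod volume) ((volume : Measure (Vel d)).prod volume) :=
    (MeasurePreserving.id _).skew_product
      (show Measurable (fun p : Vel d × Vel d => p.2 + (2:ℝ)⁻¹ • p.1) by fun_prop)
      (Filter.Eventually.of_forall fun x => map_add_right_eq_self volume ((2:ℝ)⁻¹ • x))
  have h3 := Measure.measurePreserving_swap (μ := (volume : Measure (Vel d))) (ν := (volume : Measure (Vel d)))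
  have h := h3.comp (h2.comp h1)
  have he : (Prod.swap ∘ ((fun p : Vel d × Vel d => (p.1, p.2 + (2:ℝ)⁻¹ • p.1)) ∘
      fun z : Vel d × Vel d => (z.1 - z.2, z.2)))
      = fun p : Vel d × Vel d => ((2:ℝ)⁻¹ • (p.1 + p.2), p.1 - p.2) := by
    funext p
    simp only [Function.comp_apply, Prod.swap_prod_mk, Prod.mk.injEq]
    constructor
    · module
    · trivial
  rwa [he] at h

lemma polar_swap (d : ℕ) (hd : 1 ≤ d) :
    Measure.map (fun z : Vel d × sphere (0 : Vel d) 1 => (z.1, (z.2 : Vel d)))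
        ((volume : Measure (Vel d)).prod (sphereMeasure d))
      = Measure.map
          (fun z : Vel d × sphere (0 : Vel d) 1 => (‖z.1‖ • (z.2 : Vel d), ‖z.1‖⁻¹ • z.1))
        ((volume : Measure (Vel d)).prod (sphereMeasure d)) := by
  haveI : Nonempty (Fin d) := ⟨⟨0, hd⟩⟩
  set μ : Measure (Vel d) := volume with hμdef
  set ν : Measure (sphere (0 : Vel d) 1) := sphereMeasure d with hνdef
  set ρ : Measure (Ioi (0:ℝ)) := .volumeIoiPow (Module.finrank ℝ (Vel d) - 1) with hρdef
  have hν : ν = μ.toSphere := rfl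
  set Pm : ({0}ᶜ : Set (Vel d)) ≃ᵐ sphere (0 : Vel d) 1 × Ioi (0:ℝ) :=
    (homeomorphUnitSphereProd (Vel d)).toMeasurableEquiv with hPm
  have hP : MeasurePreserving Pm (μ.comap Subtype.val) (ν.prod ρ) := by
    rw [hν]
    exact μ.measurePreserving_homeomorphUnitSphereProd
  have hPsymm : MeasurePreserving Pm.symm (ν.prod ρ) (μ.comap Subtype.val) := hP.symm Pm
  have hc : Measurable (Subtype.val : ({0}ᶜ : Set (Vel d)) → Vel d) := measurable_subtype_coe
  have hmapc : Measure.map (Subtype.val : ({0}ᶜ : Set (Vel d)) → Vel d)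
      (μ.comap Subtype.val) = μ := by
    rw [(MeasurableEmbedding.subtype_coe (measurableSet_singleton (0 : Vel d)).compl).map_comap,
      Subtype.range_coe, MeasureTheory.restrict_compl_singleton]
  set m : Measure ((sphere (0 : Vel d) 1 × Ioi (0:ℝ)) × sphere (0 : Vel d) 1) :=
    (ν.prod ρ).prod ν with hm
  haveI : SFinite (Measure.comap (Subtype.val : ({0}ᶜ : Set (Vel d)) → Vel d) μ) := by
    rw [← hPsymm.map_eq]; infer_instance
  have e1 : μ.prod ν
      = Measure.map (Prod.map (Subtype.val : ({0}ᶜ : Set (Vel d)) → Vel d) id)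
          ((μ.comap Subtype.val).prod ν) := by
    rw [← Measure.map_prod_map _ _ hc measurable_id, hmapc, Measure.map_id]
  have e2 : (μ.comap Subtype.val).prod ν = Measure.map (Prod.map Pm.symm id) m :=
    (hPsymm.prod (MeasurePreserving.id ν)).map_eq.symm
  -- the composed coordinate functions
  set F : (sphere (0 : Vel d) 1 × Ioi (0:ℝ)) × sphere (0 : Vel d) 1 → Vel d × Vel d :=
    fun z => ((z.1.2 : ℝ) • (z.1.1 : Vel d), (z.2 : Vel d)) with hF
  set G : (sphere (0 : Vel d) 1 × Ioi (0:ℝ)) × sphere (0 : Vel d) 1 → Vel d × Vel d :=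
    fun z => ((z.1.2 : ℝ) • (z.2 : Vel d), (z.1.1 : Vel d)) with hG
  have hFmeas : Measurable F :=
    ((measurable_subtype_coe.comp measurable_fst.snd).smul
      (measurable_subtype_coe.comp measurable_fst.fst)).prodMk
      (measurable_subtype_coe.comp measurable_snd)
  have hGmeas : Measurable G :=
    ((measurable_subtype_coe.comp measurable_fst.snd).smul
      (measurable_subtype_coe.comp measurable_snd)).prodMk
      (measurable_subtype_coe.comp measurable_fst.fst)
  have hιmeas : Measurable (fun z : Vel d × sphere (0 : Vel d) 1 => (z.1, (z.2 : Vel d))) :=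
    measurable_fst.prodMk (measurable_subtype_coe.comp measurable_snd)
  have hτmeas : Measurable
      (fun z : Vel d × sphere (0 : Vel d) 1 => (‖z.1‖ • (z.2 : Vel d), ‖z.1‖⁻¹ • z.1)) :=
    ((measurable_fst.norm).smul (measurable_subtype_coe.comp measurable_snd)).prodMk
      ((measurable_fst.norm.inv).smul measurable_fst)
  have hPmid : Measurable (Prod.map Pm.symm (id : sphere (0 : Vel d) 1 → _)) :=
    Pm.symm.measurable.prodMap measurable_id
  have hcid : Measurable (Prod.map (Subtype.val : ({0}ᶜ : Set (Vel d)) → Vel d)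
      (id : sphere (0 : Vel d) 1 → _)) := hc.prodMap measurable_id
  have key : ∀ z : (sphere (0 : Vel d) 1 × Ioi (0:ℝ)) × sphere (0 : Vel d) 1,
      (Prod.map (Subtype.val : ({0}ᶜ : Set (Vel d)) → Vel d) id) (Prod.map Pm.symm id z)
        = ((z.1.2 : ℝ) • (z.1.1 : Vel d), z.2) := fun z => rfl
  have claimL : Measure.map (fun z : Vel d × sphere (0 : Vel d) 1 => (z.1, (z.2 : Vel d)))
      (μ.prod ν) = Measure.map F m := by
    rw [e1, e2, Measure.map_map hcid hPmid, Measure.map_map hιmeas (hcid.comp hPmid)]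
    rfl
  have claimR : Measure.map
      (fun z : Vel d × sphere (0 : Vel d) 1 => (‖z.1‖ • (z.2 : Vel d), ‖z.1‖⁻¹ • z.1))
      (μ.prod ν) = Measure.map G m := by
    rw [e1, e2, Measure.map_map hcid hPmid, Measure.map_map hτmeas (hcid.comp hPmid)]
    congr 1
    funext z
    obtain ⟨⟨ω, r⟩, σ⟩ := z
    have hr : (0:ℝ) < (r:ℝ) := r.2
    have hω : ‖(ω : Vel d)‖ = 1 := mem_sphere_zero_iff_norm.mp ω.2
    have hnorm : ‖(r : ℝ) • (ω : Vel d)‖ = (r:ℝ) := by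
      rw [norm_smul, hω, mul_one, Real.norm_eq_abs, abs_of_pos hr]
    simp only [Function.comp_apply, key ((ω, r), σ), hG, hnorm]
    refine Prod.ext rfl ?_
    simp only [smul_smul, inv_mul_cancel₀ hr.ne', one_smul]
  have hW : MeasurePreserving
      (fun z : (sphere (0 : Vel d) 1 × Ioi (0:ℝ)) × sphere (0 : Vel d) 1 =>
        ((z.2, z.1.2), z.1.1)) m m := by
    have h1 := MeasureTheory.measurePreserving_prodAssoc ν ρ ν
    have h2 := Measure.measurePreserving_swap (μ := ν) (ν := ρ.prod ν)
    have h3 := (Measure.measurePreserving_swap (μ := ρ) (ν := ν)).prod (MeasurePreserving.id ν)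
    have h := h3.comp (h2.comp h1)
    convert h using 1
    rfl
  have hWG : G = F ∘ (fun z : (sphere (0 : Vel d) 1 × Ioi (0:ℝ)) × sphere (0 : Vel d) 1 =>
      ((z.2, z.1.2), z.1.1)) := rfl
  rw [claimL, claimR, hWG, ← Measure.map_map hFmeas hW.measurable, hW.map_eq]

end AuxCollision

/-- Conservation of mass by the Boltzmann collision operator:
`∫ Q(f,f)(v) dv = 0`. -/
theorem collOp_conserves_mass
    (d : ℕ) (hd : 2 ≤ d) (B : ℝ → ℝ → ℝ) (hBmeas : Measurable (Function.uncurry B))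
    (hBpos : ∀ x y, 0 ≤ B x y)
    (f : Vel d → ℝ) (hfmeas : Measurable f) (hfpos : ∀ v, 0 ≤ f v)
    (hint : Integrable
      (fun p : Vel d × Vel d × sphere (0 : Vel d) 1 =>
        B (⟪(p.2.2 : Vel d), p.1 - p.2.1⟫_ℝ / ‖p.1 - p.2.1‖) ‖p.1 - p.2.1‖ *
          f p.1 * f p.2.1)
      ((volume : Measure (Vel d)).prod
        (((volume : Measure (Vel d))).prod (sphereMeasure d)))) :
    ∫ v : Vel d, collOp d B f f v = 0 := by
  classical
  set μ : Measure (Vel d) := volume with hμdef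
  set ν : Measure (sphere (0 : Vel d) 1) := sphereMeasure d with hνdef
  set P3 : Measure (Vel d × Vel d × sphere (0 : Vel d) 1) := μ.prod (μ.prod ν) with hP3def
  -- the full integrand, the gain term and the loss term
  set G : Vel d × Vel d × sphere (0 : Vel d) 1 → ℝ := fun p =>
    B (⟪(p.2.2 : Vel d), p.1 - p.2.1⟫_ℝ / ‖p.1 - p.2.1‖) ‖p.1 - p.2.1‖ *
      (f ((2 : ℝ)⁻¹ • (p.1 + p.2.1) - (‖p.1 - p.2.1‖ / 2) • (p.2.2 : Vel d)) *
         f ((2 : ℝ)⁻¹ • (p.1 + p.2.1) + (‖p.1 - p.2.1‖ / 2) • (p.2.2 : Vel d))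
        - f p.2.1 * f p.1) with hGdef
  set Ggain : Vel d × Vel d × sphere (0 : Vel d) 1 → ℝ := fun p =>
    B (⟪(p.2.2 : Vel d), p.1 - p.2.1⟫_ℝ / ‖p.1 - p.2.1‖) ‖p.1 - p.2.1‖ *
      (f ((2 : ℝ)⁻¹ • (p.1 + p.2.1) - (‖p.1 - p.2.1‖ / 2) • (p.2.2 : Vel d)) *
         f ((2 : ℝ)⁻¹ • (p.1 + p.2.1) + (‖p.1 - p.2.1‖ / 2) • (p.2.2 : Vel d)))
    with hGgaindef
  set Gloss : Vel d × Vel d × sphere (0 : Vel d) 1 → ℝ := fun p =>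
    B (⟪(p.2.2 : Vel d), p.1 - p.2.1⟫_ℝ / ‖p.1 - p.2.1‖) ‖p.1 - p.2.1‖ *
      (f p.2.1 * f p.1) with hGlossdef
  -- the collision kernel in center-of-mass coordinates (m, q, w)
  set K : Vel d × Vel d × Vel d → ℝ := fun p =>
    B (⟪p.2.2, p.2.1⟫_ℝ / ‖p.2.1‖) ‖p.2.1‖ *
      (f (p.1 + (2:ℝ)⁻¹ • p.2.1) * f (p.1 - (2:ℝ)⁻¹ • p.2.1)) with hKdef
  have hK : Measurable K := by
    apply Measurable.mul
    · exact hBmeas.comp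
        ((((measurable_snd.snd).inner (measurable_snd.fst)).div
          measurable_snd.fst.norm).prodMk measurable_snd.fst.norm)
    · fun_prop
  -- the change to center-of-mass coordinates
  set Λ : Vel d × Vel d × sphere (0 : Vel d) 1 → Vel d × Vel d × sphere (0 : Vel d) 1 :=
    fun p => ((2:ℝ)⁻¹ • (p.1 + p.2.1), p.1 - p.2.1, p.2.2) with hΛdef
  have hΛ : MeasurePreserving Λ P3 P3 := by
    have hassoc := MeasureTheory.measurePreserving_prodAssoc μ μ ν
    have h := hassoc.comp (((mp_lin d).prod (MeasurePreserving.id ν)).comp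
      (hassoc.symm MeasurableEquiv.prodAssoc))
    convert h using 1
    rfl
  -- the two point transformations on (q, σ)
  set ι : Vel d × sphere (0 : Vel d) 1 → Vel d × Vel d := fun z => (z.1, (z.2 : Vel d)) with hιdef
  set τ : Vel d × sphere (0 : Vel d) 1 → Vel d × Vel d :=
    fun z => (‖z.1‖ • (z.2 : Vel d), ‖z.1‖⁻¹ • z.1) with hτdef
  have hιmeas : Measurable ι := measurable_fst.prodMk (measurable_subtype_coe.comp measurable_snd)
  have hτmeas : Measurable τ :=
    ((measurable_fst.norm).smul (measurable_subtype_coe.comp measurable_snd)).prodMk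
      ((measurable_fst.norm.inv).smul measurable_fst)
  have hιid : Measurable (Prod.map (id : Vel d → Vel d) ι) := measurable_id.prodMap hιmeas
  have hτid : Measurable (Prod.map (id : Vel d → Vel d) τ) := measurable_id.prodMap hτmeas
  have hmap : Measure.map (Prod.map (id : Vel d → Vel d) ι) P3
      = Measure.map (Prod.map (id : Vel d → Vel d) τ) P3 := by
    rw [hP3def, ← Measure.map_prod_map _ _ measurable_id hιmeas,
      ← Measure.map_prod_map _ _ measurable_id hτmeas, polar_swap d (by omega)]
  set Hloss : Vel d × Vel d × sphere (0 : Vel d) 1 → ℝ :=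
    K ∘ Prod.map (id : Vel d → Vel d) ι with hHlossdef
  set Hgain : Vel d × Vel d × sphere (0 : Vel d) 1 → ℝ :=
    K ∘ Prod.map (id : Vel d → Vel d) τ with hHgaindef
  have hHlossmeas : Measurable Hloss := hK.comp hιid
  have hHgainmeas : Measurable Hgain := hK.comp hτid
  -- pointwise identities
  have hlossΛ : Gloss = Hloss ∘ Λ := by
    funext p
    obtain ⟨v, vs, σ⟩ := p
    simp only [hGlossdef, hHlossdef, hΛdef, hιdef, hKdef, Function.comp_apply,
      Prod.map_apply, id_eq]
    rw [show (2:ℝ)⁻¹ • (v + vs) + (2:ℝ)⁻¹ • (v - vs) = v by module,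
      show (2:ℝ)⁻¹ • (v + vs) - (2:ℝ)⁻¹ • (v - vs) = vs by module, mul_comm (f vs)]
  have hgainΛ : Ggain = Hgain ∘ Λ := by
    funext p
    obtain ⟨v, vs, σ⟩ := p
    simp only [hGgaindef, hHgaindef, hΛdef, hτdef, hKdef, Function.comp_apply,
      Prod.map_apply, id_eq]
    have hσ : ‖(σ : Vel d)‖ = 1 := mem_sphere_zero_iff_norm.mp σ.2
    have hns : ‖‖v - vs‖ • (σ : Vel d)‖ = ‖v - vs‖ := by
      rw [norm_smul, hσ, mul_one, norm_norm]
    have hsm : (2:ℝ)⁻¹ • (‖v - vs‖ • (σ : Vel d)) = (‖v - vs‖ / 2) • (σ : Vel d) := by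
      rw [smul_smul, div_eq_inv_mul]
    rcases eq_or_ne (v - vs) 0 with h0 | h0
    · rw [h0]
      simp [mul_comm]
    · have hn0 : ‖v - vs‖ ≠ 0 := norm_ne_zero_iff.mpr h0
      rw [hns, hsm, real_inner_smul_left, real_inner_smul_right,
        show ‖v - vs‖⁻¹ * (‖v - vs‖ * ⟪v - vs, (σ : Vel d)⟫_ℝ) = ⟪v - vs, (σ : Vel d)⟫_ℝ by
          field_simp,
        real_inner_comm, mul_comm (f _)]
  -- integrability of the loss term
  have hGloss_int : Integrable Gloss P3 := by
    refine hint.congr (Filter.Eventually.of_forall fun p => ?_)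
    show B _ _ * f p.1 * f p.2.1 = B _ _ * (f p.2.1 * f p.1)
    ring
  -- transfer along Λ and the polar swap
  have hHloss_int : Integrable Hloss P3 := by
    have h1 : Integrable (Hloss ∘ Λ) P3 := hlossΛ ▸ hGloss_int
    have h2 := (integrable_map_measure hHlossmeas.aestronglyMeasurable
      hΛ.aemeasurable (μ := P3)).mpr h1
    rwa [hΛ.map_eq] at h2
  have hK_int_ι : Integrable K (Measure.map (Prod.map (id : Vel d → Vel d) ι) P3) :=
    (integrable_map_measure hK.aestronglyMeasurable hιid.aemeasurable).mpr hHloss_int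
  have hK_int_τ : Integrable K (Measure.map (Prod.map (id : Vel d → Vel d) τ) P3) :=
    hmap ▸ hK_int_ι
  have hHgain_int : Integrable Hgain P3 :=
    (integrable_map_measure hK.aestronglyMeasurable hτid.aemeasurable).mp hK_int_τ
  have hGgain_int : Integrable Ggain P3 := by
    rw [hgainΛ]
    have h : Integrable Hgain (Measure.map Λ P3) := by rwa [hΛ.map_eq]
    exact (integrable_map_measure hHgainmeas.aestronglyMeasurable hΛ.aemeasurable).mp h
  -- equality of the gain and loss integrals
  have hints : ∫ p, Ggain p ∂P3 = ∫ p, Gloss p ∂P3 := by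
    calc ∫ p, Ggain p ∂P3 = ∫ p, Hgain (Λ p) ∂P3 := by rw [hgainΛ]; rfl
    _ = ∫ p, Hgain p ∂P3 := by
        rw [← integral_map hΛ.aemeasurable (hΛ.map_eq.symm ▸ hHgainmeas.aestronglyMeasurable),
          hΛ.map_eq]
    _ = ∫ p, K p ∂(Measure.map (Prod.map (id : Vel d → Vel d) τ) P3) :=
        (integral_map hτid.aemeasurable hK.aestronglyMeasurable).symm
    _ = ∫ p, K p ∂(Measure.map (Prod.map (id : Vel d → Vel d) ι) P3) := by rw [hmap]
    _ = ∫ p, Hloss p ∂P3 := integral_map hιid.aemeasurable hK.aestronglyMeasurable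
    _ = ∫ p, Hloss (Λ p) ∂P3 := by
        rw [← integral_map hΛ.aemeasurable (hΛ.map_eq.symm ▸ hHlossmeas.aestronglyMeasurable),
          hΛ.map_eq]
    _ = ∫ p, Gloss p ∂P3 := by rw [hlossΛ]; simp only [Function.comp_apply]
  -- G = Ggain - Gloss
  have hGsub : G = fun p => Ggain p - Gloss p := by
    funext p; simp only [hGdef, hGgaindef, hGlossdef, mul_sub]
  have hG_int : Integrable G P3 := by rw [hGsub]; exact hGgain_int.sub hGloss_int
  have hGzero : ∫ p, G p ∂P3 = 0 := by
    rw [hGsub, integral_sub hGgain_int hGloss_int, hints, sub_self]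
  -- Fubini
  have hae : ∀ᵐ v ∂μ, collOp d B f f v = ∫ y, G (v, y) ∂(μ.prod ν) := by
    filter_upwards [hG_int.prod_right_ae] with v hv
    rw [MeasureTheory.integral_prod _ hv]
    rfl
  calc ∫ v : Vel d, collOp d B f f v = ∫ v, ∫ y, G (v, y) ∂(μ.prod ν) ∂μ :=
        integral_congr_ae hae
  _ = ∫ p, G p ∂P3 := (MeasureTheory.integral_prod G hG_int).symm
  _ = 0 := hGzero
end
end

section
/- Let d ≥ 2, let B be a nonnegative measurable collision kernel, and let f : ℝ^d → [0,∞) be measurable. Assume that the function (v, v_*, σ) ↦ B(cos θ, |v−v_*|) f(v) f(v_*) (1 + |v|² + |v_*|²) is integrable on ℝ^d × ℝ^d × S^{d−1}. Then the collision operator conserves kinetic energy: ∫_{ℝ^d} |v|² · Q(f,f)(v) dv = 0. -/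
open MeasureTheory Metric Real
open scoped InnerProductSpace Pointwise

noncomputable section

/-! ### Auxiliary definitions and lemmas -/

abbrev Sph (d : ℕ) := sphere (0 : Vel d) 1

instance inst_s5 (d : ℕ) : IsFiniteMeasure (sphereMeasure d) :=
  inferInstanceAs (IsFiniteMeasure (volume : Measure (Vel d)).toSphere)

open Classical in
def unitV {d : ℕ} (q : Vel d) (σ : Sph d) : Sph d :=
  ⟨if q = 0 then (σ : Vel d) else ‖q‖⁻¹ • q, by
    rcases eq_or_ne q 0 with h | h
    · simpa [h] using σ.2
    · simp only [if_neg h, mem_sphere_zero_iff_norm, norm_smul, norm_inv, norm_norm,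
        inv_mul_cancel₀ (norm_ne_zero_iff.2 h)]⟩

open Classical in
lemma unitV_coe_of_ne {d : ℕ} {q : Vel d} (σ : Sph d) (hq : q ≠ 0) :
    (unitV q σ : Vel d) = ‖q‖⁻¹ • q := by
  simp [unitV, hq]

open Classical in
lemma measurable_unitV {d : ℕ} : Measurable fun p : Vel d × Sph d => unitV p.1 p.2 := by
  apply Measurable.subtype_mk
  exact Measurable.ite (isClosed_eq continuous_fst continuous_const).measurableSet
    (measurable_subtype_coe.comp measurable_snd)
    (measurable_fst.norm.inv.smul measurable_fst)

def polarMap {d : ℕ} (p : Vel d × Sph d) : Vel d × Sph d :=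
  (‖p.1‖ • (p.2 : Vel d), unitV p.1 p.2)

lemma measurable_polarMap {d : ℕ} : Measurable (polarMap (d := d)) :=
  (measurable_fst.norm.smul (measurable_subtype_coe.comp measurable_snd)).prodMk
    measurable_unitV

theorem measurePreserving_polarMap (d : ℕ) [Nontrivial (Vel d)] :
    MeasurePreserving (polarMap (d := d))
      (volume.prod (sphereMeasure d)) (volume.prod (sphereMeasure d)) := by
  classical
  set μS := sphereMeasure d with hμS
  set ι := Measure.volumeIoiPow (Module.finrank ℝ (Vel d) - 1) with hι
  set ν : Measure ({0}ᶜ : Set (Vel d)) := volume.comap Subtype.val with hν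
  set h : ({0}ᶜ : Set (Vel d)) ≃ᵐ (Sph d × Set.Ioi (0:ℝ)) :=
    (homeomorphUnitSphereProd (Vel d)).toMeasurableEquiv with hdef
  have hh : MeasurePreserving h ν (μS.prod ι) :=
    ⟨h.measurable, (Measure.measurePreserving_homeomorphUnitSphereProd volume).map_eq⟩
  haveI : SFinite ν := by rw [← (hh.symm h).map_eq]; infer_instance
  have h1 : MeasurePreserving (fun z : ({0}ᶜ : Set (Vel d)) × Sph d => (h z.1, z.2))
      (ν.prod μS) ((μS.prod ι).prod μS) := hh.prod (.id μS)
  have k1 : MeasurePreserving (Prod.swap : ((Sph d × Set.Ioi (0:ℝ)) × Sph d) → _)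
      ((μS.prod ι).prod μS) (μS.prod ((μS.prod ι))) := Measure.measurePreserving_swap
  have k2 : MeasurePreserving (Prod.map (id : Sph d → Sph d)
        (Prod.swap : Sph d × Set.Ioi (0:ℝ) → _))
      (μS.prod (μS.prod ι)) (μS.prod (ι.prod μS)) :=
    (MeasurePreserving.id μS).prod Measure.measurePreserving_swap
  have k3 : MeasurePreserving (MeasurableEquiv.prodAssoc.symm :
        (Sph d × (Set.Ioi (0:ℝ) × Sph d)) ≃ᵐ _)
      (μS.prod (ι.prod μS)) ((μS.prod ι).prod μS) :=
    (measurePreserving_prodAssoc μS ι μS).symm _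
  have hk : MeasurePreserving
      (fun z : (Sph d × Set.Ioi (0:ℝ)) × Sph d => ((z.2, z.1.2), z.1.1))
      ((μS.prod ι).prod μS) ((μS.prod ι).prod μS) :=
    k3.comp (k2.comp k1)
  have hΨ : MeasurePreserving
      (fun z : ({0}ᶜ : Set (Vel d)) × Sph d => (h.symm ((z.2, (h z.1).2)), (h z.1).1))
      (ν.prod μS) (ν.prod μS) := ((hh.symm h).prod (.id μS)).comp (hk.comp h1)
  have hembm : Measurable (fun z : ({0}ᶜ : Set (Vel d)) × Sph d => ((z.1 : Vel d), z.2)) :=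
    (measurable_subtype_coe.comp measurable_fst).prodMk measurable_snd
  have hcomm : ∀ z : ({0}ᶜ : Set (Vel d)) × Sph d,
      polarMap ((z.1 : Vel d), z.2) =
        ((h.symm ((z.2, (h z.1).2)) : Vel d), (h z.1).1) := by
    rintro ⟨x, σ⟩
    have hx : (x : Vel d) ≠ 0 := x.2
    refine Prod.ext ?_ ?_
    · show ‖(x : Vel d)‖ • (σ : Vel d) =
        ((homeomorphUnitSphereProd (Vel d)).symm
          ((σ, ((homeomorphUnitSphereProd (Vel d)) x).2)) : Vel d)
      rw [homeomorphUnitSphereProd_symm_apply_coe]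
      simp
    · show unitV (x : Vel d) σ = ((homeomorphUnitSphereProd (Vel d)) x).1
      apply Subtype.ext
      show (if (x : Vel d) = 0 then (σ : Vel d) else ‖(x : Vel d)‖⁻¹ • (x : Vel d)) = _
      rw [if_neg hx, homeomorphUnitSphereProd_apply_fst_coe]
  have hmap : Measure.map (fun z : ({0}ᶜ : Set (Vel d)) × Sph d => ((z.1 : Vel d), z.2))
      (ν.prod μS) = volume.prod μS := by
    have e1 : Measure.map (fun z : ({0}ᶜ : Set (Vel d)) × Sph d => ((z.1 : Vel d), z.2))
        (ν.prod μS) = (Measure.map Subtype.val ν).prod (Measure.map id μS) :=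
      (Measure.map_prod_map _ _ measurable_subtype_coe measurable_id).symm
    rw [e1, Measure.map_id, hν, map_comap_subtype_coe (measurableSet_singleton (0:Vel d)).compl]
    have e2 : (volume.restrict ({0}ᶜ : Set (Vel d))).prod μS
        = (volume.prod μS).restrict (({0}ᶜ : Set (Vel d)) ×ˢ Set.univ) := by
      rw [← Measure.prod_restrict, Measure.restrict_univ]
    rw [e2]
    apply Measure.restrict_eq_self_of_ae_mem
    rw [ae_iff]
    have e3 : {z : Vel d × Sph d | ¬ z ∈ (({0}ᶜ : Set (Vel d)) ×ˢ Set.univ)}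
        = ({(0:Vel d)} : Set (Vel d)) ×ˢ (Set.univ : Set (Sph d)) := by
      ext z
      simp only [Set.mem_setOf_eq, Set.mem_prod, Set.mem_compl_iff, Set.mem_singleton_iff,
        Set.mem_univ, and_true, not_not]
    rw [e3, Measure.prod_prod]
    simp
  refine ⟨measurable_polarMap, ?_⟩
  calc Measure.map polarMap (volume.prod μS)
      = Measure.map polarMap (Measure.map
          (fun z : ({0}ᶜ : Set (Vel d)) × Sph d => ((z.1 : Vel d), z.2)) (ν.prod μS)) := by
        rw [hmap]
    _ = Measure.map (polarMap ∘ (fun z : ({0}ᶜ : Set (Vel d)) × Sph d => ((z.1 : Vel d), z.2)))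
          (ν.prod μS) := Measure.map_map measurable_polarMap hembm
    _ = Measure.map ((fun z : ({0}ᶜ : Set (Vel d)) × Sph d => ((z.1 : Vel d), z.2)) ∘
          (fun z => (h.symm ((z.2, (h z.1).2)), (h z.1).1))) (ν.prod μS) := by
        congr 1; funext z; exact hcomm z
    _ = Measure.map (fun z : ({0}ᶜ : Set (Vel d)) × Sph d => ((z.1 : Vel d), z.2))
          (Measure.map (fun z => (h.symm ((z.2, (h z.1).2)), (h z.1).1)) (ν.prod μS)) :=
        (Measure.map_map hembm hΨ.measurable).symm
    _ = Measure.map (fun z : ({0}ᶜ : Set (Vel d)) × Sph d => ((z.1 : Vel d), z.2))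
          (ν.prod μS) := by rw [hΨ.map_eq]
    _ = volume.prod μS := hmap

theorem measurePreserving_negSphere (d : ℕ) :
    MeasurePreserving (fun σ : Sph d => -σ) (sphereMeasure d) (sphereMeasure d) := by
  have hmeas : Measurable (fun σ : Sph d => -σ) := continuous_neg.measurable
  refine ⟨hmeas, ?_⟩
  ext s hs
  rw [Measure.map_apply hmeas hs]
  show (volume : Measure (Vel d)).toSphere _ = (volume : Measure (Vel d)).toSphere s
  rw [Measure.toSphere_apply' _ (hmeas hs), Measure.toSphere_apply' _ hs]
  have h1 : (Subtype.val '' ((fun σ : Sph d => -σ) ⁻¹' s)) = -(Subtype.val '' s) := by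
    ext x
    simp only [Set.mem_image, Set.mem_preimage, Set.mem_neg]
    constructor
    · rintro ⟨σ, hσ, rfl⟩
      exact ⟨-σ, hσ, by simp⟩
    · rintro ⟨τ, hτ, hx⟩
      exact ⟨-τ, by simpa using hτ, by rw [coe_neg_sphere, hx, neg_neg]⟩
  have h2 : Set.Ioo (0:ℝ) 1 • (-(Subtype.val '' s)) = -(Set.Ioo (0:ℝ) 1 • (Subtype.val '' s)) := by
    ext x
    simp only [Set.mem_smul, Set.mem_neg]
    constructor
    · rintro ⟨t, ht, y, hy, rfl⟩
      exact ⟨t, ht, -y, hy, by simp [smul_neg]⟩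
    · rintro ⟨t, ht, y, hy, hx⟩
      exact ⟨t, ht, -y, by simpa using hy, by rw [smul_neg, hx, neg_neg]⟩
  rw [h1, h2, Measure.measure_neg]

def collT {d : ℕ} (p : Vel d × Vel d × Sph d) : Vel d × Vel d × Sph d :=
  ((2:ℝ)⁻¹ • (p.1 + p.2.1) + (2:ℝ)⁻¹ • (‖p.1 - p.2.1‖ • (p.2.2 : Vel d)),
   ((2:ℝ)⁻¹ • (p.1 + p.2.1) - (2:ℝ)⁻¹ • (‖p.1 - p.2.1‖ • (p.2.2 : Vel d)),
    unitV (p.1 - p.2.1) p.2.2))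

def collS {d : ℕ} (p : Vel d × Vel d × Sph d) : Vel d × Vel d × Sph d :=
  (p.2.1, (p.1, -p.2.2))

theorem measurePreserving_collS (d : ℕ) :
    MeasurePreserving (collS (d := d))
      (volume.prod (volume.prod (sphereMeasure d)))
      (volume.prod (volume.prod (sphereMeasure d))) := by
  have mp1 := (measurePreserving_prodAssoc (volume : Measure (Vel d))
    (volume : Measure (Vel d)) (sphereMeasure d)).symm
    (MeasurableEquiv.prodAssoc : (Vel d × Vel d) × Sph d ≃ᵐ Vel d × Vel d × Sph d)
  have mpmid : MeasurePreserving
      (Prod.map (Prod.swap : Vel d × Vel d → Vel d × Vel d) (fun σ : Sph d => -σ))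
      (((volume : Measure (Vel d)).prod volume).prod (sphereMeasure d))
      (((volume : Measure (Vel d)).prod volume).prod (sphereMeasure d)) :=
    MeasurePreserving.prod Measure.measurePreserving_swap (measurePreserving_negSphere d)
  have mp7 := measurePreserving_prodAssoc (volume : Measure (Vel d))
    (volume : Measure (Vel d)) (sphereMeasure d)
  exact mp7.comp (mpmid.comp mp1)

theorem measurePreserving_collT (d : ℕ) [Nontrivial (Vel d)] :
    MeasurePreserving (collT (d := d))
      (volume.prod (volume.prod (sphereMeasure d)))
      (volume.prod (volume.prod (sphereMeasure d))) := by
  have hA1 : MeasurePreserving (fun p : Vel d × Vel d => (p.1, p.1 - p.2))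
      (volume.prod volume) (volume.prod volume) :=
    (MeasurePreserving.id volume).skew_product (measurable_fst.sub measurable_snd)
      (Filter.Eventually.of_forall fun x =>
        (Measure.measurePreserving_sub_left volume x).map_eq)
  have hA2' : MeasurePreserving (fun p : Vel d × Vel d => (p.1, p.2 - (2:ℝ)⁻¹ • p.1))
      (volume.prod volume) (volume.prod volume) :=
    (MeasurePreserving.id volume).skew_product
      (measurable_snd.sub (measurable_fst.const_smul (2:ℝ)⁻¹))
      (Filter.Eventually.of_forall fun x =>
        (measurePreserving_sub_right volume ((2:ℝ)⁻¹ • x)).map_eq)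
  have hA2 : MeasurePreserving (fun p : Vel d × Vel d => (p.1 - (2:ℝ)⁻¹ • p.2, p.2))
      (volume.prod volume) (volume.prod volume) :=
    Measure.measurePreserving_swap.comp (hA2'.comp Measure.measurePreserving_swap)
  have hA : MeasurePreserving (fun p : Vel d × Vel d => ((2:ℝ)⁻¹ • (p.1 + p.2), p.1 - p.2))
      (volume.prod volume) (volume.prod volume) := by
    have h := hA2.comp hA1
    have heq : (fun p : Vel d × Vel d => ((2:ℝ)⁻¹ • (p.1 + p.2), p.1 - p.2))
        = (fun p : Vel d × Vel d => (p.1 - (2:ℝ)⁻¹ • p.2, p.2)) ∘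
            (fun p : Vel d × Vel d => (p.1, p.1 - p.2)) := by
      funext p
      refine Prod.ext ?_ rfl
      show (2:ℝ)⁻¹ • (p.1 + p.2) = p.1 - (2:ℝ)⁻¹ • (p.1 - p.2)
      module
    rw [heq]; exact h
  have hB2' : MeasurePreserving (fun p : Vel d × Vel d => (p.1, p.2 + (2:ℝ)⁻¹ • p.1))
      (volume.prod volume) (volume.prod volume) :=
    (MeasurePreserving.id volume).skew_product
      (measurable_snd.add (measurable_fst.const_smul (2:ℝ)⁻¹))
      (Filter.Eventually.of_forall fun x =>
        (measurePreserving_add_right volume ((2:ℝ)⁻¹ • x)).map_eq)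
  have hB2 : MeasurePreserving (fun p : Vel d × Vel d => (p.1 + (2:ℝ)⁻¹ • p.2, p.2))
      (volume.prod volume) (volume.prod volume) :=
    Measure.measurePreserving_swap.comp (hB2'.comp Measure.measurePreserving_swap)
  have hAinv : MeasurePreserving
      (fun p : Vel d × Vel d => (p.1 + (2:ℝ)⁻¹ • p.2, p.1 - (2:ℝ)⁻¹ • p.2))
      (volume.prod volume) (volume.prod volume) := by
    have h := hA1.comp hB2
    have heq : (fun p : Vel d × Vel d => (p.1 + (2:ℝ)⁻¹ • p.2, p.1 - (2:ℝ)⁻¹ • p.2))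
        = (fun p : Vel d × Vel d => (p.1, p.1 - p.2)) ∘
            (fun p : Vel d × Vel d => (p.1 + (2:ℝ)⁻¹ • p.2, p.2)) := by
      funext p
      refine Prod.ext rfl ?_
      show p.1 - (2:ℝ)⁻¹ • p.2 = p.1 + (2:ℝ)⁻¹ • p.2 - p.2
      module
    rw [heq]; exact h
  have mp1 := (measurePreserving_prodAssoc (volume : Measure (Vel d))
    (volume : Measure (Vel d)) (sphereMeasure d)).symm
    (MeasurableEquiv.prodAssoc : (Vel d × Vel d) × Sph d ≃ᵐ Vel d × Vel d × Sph d)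
  have mp2 := hA.prod (MeasurePreserving.id (sphereMeasure d))
  have mp3 := measurePreserving_prodAssoc (volume : Measure (Vel d))
    (volume : Measure (Vel d)) (sphereMeasure d)
  have mp4 : MeasurePreserving
      (Prod.map (id : Vel d → Vel d) (polarMap (d := d)))
      ((volume : Measure (Vel d)).prod (volume.prod (sphereMeasure d)))
      ((volume : Measure (Vel d)).prod (volume.prod (sphereMeasure d))) :=
    (MeasurePreserving.id (volume : Measure (Vel d))).prod (measurePreserving_polarMap d)
  have mp5 := (measurePreserving_prodAssoc (volume : Measure (Vel d))
    (volume : Measure (Vel d)) (sphereMeasure d)).symm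
    (MeasurableEquiv.prodAssoc : (Vel d × Vel d) × Sph d ≃ᵐ Vel d × Vel d × Sph d)
  have mp6 := hAinv.prod (MeasurePreserving.id (sphereMeasure d))
  have mp7 := measurePreserving_prodAssoc (volume : Measure (Vel d))
    (volume : Measure (Vel d)) (sphereMeasure d)
  exact mp7.comp (mp6.comp (mp5.comp (mp4.comp (mp3.comp (mp2.comp mp1)))))

/-! ### Pointwise functions -/

def Bker {d : ℕ} (B : ℝ → ℝ → ℝ) (p : Vel d × Vel d × Sph d) : ℝ :=
  B (⟪(p.2.2 : Vel d), p.1 - p.2.1⟫_ℝ / ‖p.1 - p.2.1‖) ‖p.1 - p.2.1‖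

def aPt {d : ℕ} (p : Vel d × Vel d × Sph d) : Vel d :=
  (2:ℝ)⁻¹ • (p.1 + p.2.1) - (‖p.1 - p.2.1‖ / 2) • (p.2.2 : Vel d)

def bPt {d : ℕ} (p : Vel d × Vel d × Sph d) : Vel d :=
  (2:ℝ)⁻¹ • (p.1 + p.2.1) + (‖p.1 - p.2.1‖ / 2) • (p.2.2 : Vel d)

lemma collT_fst {d : ℕ} (p : Vel d × Vel d × Sph d) : (collT p).1 = bPt p := by
  show _ + (2:ℝ)⁻¹ • (‖p.1 - p.2.1‖ • (p.2.2 : Vel d)) = _ + (‖p.1 - p.2.1‖ / 2) • (p.2.2 : Vel d)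
  rw [smul_smul]
  ring_nf

lemma collT_snd_fst {d : ℕ} (p : Vel d × Vel d × Sph d) : (collT p).2.1 = aPt p := by
  show _ - (2:ℝ)⁻¹ • (‖p.1 - p.2.1‖ • (p.2.2 : Vel d)) = _ - (‖p.1 - p.2.1‖ / 2) • (p.2.2 : Vel d)
  rw [smul_smul]
  ring_nf

lemma norm_coe_sphere {d : ℕ} (σ : Sph d) : ‖(σ : Vel d)‖ = 1 :=
  mem_sphere_zero_iff_norm.1 σ.2

lemma collT_diff {d : ℕ} (p : Vel d × Vel d × Sph d) :
    (collT p).1 - (collT p).2.1 = ‖p.1 - p.2.1‖ • (p.2.2 : Vel d) := by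
  show ((2:ℝ)⁻¹ • (p.1 + p.2.1) + (2:ℝ)⁻¹ • (‖p.1 - p.2.1‖ • (p.2.2 : Vel d)))
      - ((2:ℝ)⁻¹ • (p.1 + p.2.1) - (2:ℝ)⁻¹ • (‖p.1 - p.2.1‖ • (p.2.2 : Vel d))) = _
  module

lemma collT_norm_diff {d : ℕ} (p : Vel d × Vel d × Sph d) :
    ‖(collT p).1 - (collT p).2.1‖ = ‖p.1 - p.2.1‖ := by
  rw [collT_diff, norm_smul, norm_norm, norm_coe_sphere, mul_one]

lemma Bker_collT {d : ℕ} (B : ℝ → ℝ → ℝ) (p : Vel d × Vel d × Sph d)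
    (hp : p.1 ≠ p.2.1) : Bker B (collT p) = Bker B p := by
  have hq : p.1 - p.2.1 ≠ 0 := sub_ne_zero.2 hp
  have hr : ‖p.1 - p.2.1‖ ≠ 0 := norm_ne_zero_iff.2 hq
  unfold Bker
  rw [collT_norm_diff, collT_diff]
  congr 1
  show ⟪(unitV (p.1 - p.2.1) p.2.2 : Vel d), ‖p.1 - p.2.1‖ • (p.2.2 : Vel d)⟫_ℝ
      / ‖p.1 - p.2.1‖ = _
  rw [unitV_coe_of_ne _ hq, real_inner_smul_left, real_inner_smul_right,
    real_inner_comm]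
  field_simp

lemma aPt_collT {d : ℕ} (p : Vel d × Vel d × Sph d) (hp : p.1 ≠ p.2.1) :
    aPt (collT p) = p.2.1 := by
  have hq : p.1 - p.2.1 ≠ 0 := sub_ne_zero.2 hp
  have hr : ‖p.1 - p.2.1‖ ≠ 0 := norm_ne_zero_iff.2 hq
  unfold aPt
  rw [collT_norm_diff]
  have h1 : (collT p).1 + (collT p).2.1 = p.1 + p.2.1 := by
    show ((2:ℝ)⁻¹ • (p.1 + p.2.1) + (2:ℝ)⁻¹ • (‖p.1 - p.2.1‖ • (p.2.2 : Vel d)))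
        + ((2:ℝ)⁻¹ • (p.1 + p.2.1) - (2:ℝ)⁻¹ • (‖p.1 - p.2.1‖ • (p.2.2 : Vel d))) = _
    module
  rw [h1]
  have h2 : ((collT p).2.2 : Vel d) = ‖p.1 - p.2.1‖⁻¹ • (p.1 - p.2.1) :=
    unitV_coe_of_ne _ hq
  rw [h2, smul_smul]
  have h3 : ‖p.1 - p.2.1‖ / 2 * ‖p.1 - p.2.1‖⁻¹ = (2:ℝ)⁻¹ := by
    field_simp
  rw [h3]
  module

lemma bPt_collT {d : ℕ} (p : Vel d × Vel d × Sph d) (hp : p.1 ≠ p.2.1) :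
    bPt (collT p) = p.1 := by
  have hq : p.1 - p.2.1 ≠ 0 := sub_ne_zero.2 hp
  have hr : ‖p.1 - p.2.1‖ ≠ 0 := norm_ne_zero_iff.2 hq
  unfold bPt
  rw [collT_norm_diff]
  have h1 : (collT p).1 + (collT p).2.1 = p.1 + p.2.1 := by
    show ((2:ℝ)⁻¹ • (p.1 + p.2.1) + (2:ℝ)⁻¹ • (‖p.1 - p.2.1‖ • (p.2.2 : Vel d)))
        + ((2:ℝ)⁻¹ • (p.1 + p.2.1) - (2:ℝ)⁻¹ • (‖p.1 - p.2.1‖ • (p.2.2 : Vel d))) = _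
    module
  rw [h1]
  have h2 : ((collT p).2.2 : Vel d) = ‖p.1 - p.2.1‖⁻¹ • (p.1 - p.2.1) :=
    unitV_coe_of_ne _ hq
  rw [h2, smul_smul]
  have h3 : ‖p.1 - p.2.1‖ / 2 * ‖p.1 - p.2.1‖⁻¹ = (2:ℝ)⁻¹ := by
    field_simp
  rw [h3]
  module

lemma Bker_collS {d : ℕ} (B : ℝ → ℝ → ℝ) (p : Vel d × Vel d × Sph d) :
    Bker B (collS p) = Bker B p := by
  unfold Bker collS
  simp only
  rw [norm_sub_rev]
  congr 2
  rw [coe_neg_sphere]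
  have : p.2.1 - p.1 = -(p.1 - p.2.1) := by module
  rw [this, inner_neg_neg]

lemma aPt_collS {d : ℕ} (p : Vel d × Vel d × Sph d) : aPt (collS p) = bPt p := by
  unfold aPt bPt collS
  simp only
  rw [norm_sub_rev p.2.1 p.1, coe_neg_sphere]
  module

lemma bPt_collS {d : ℕ} (p : Vel d × Vel d × Sph d) : bPt (collS p) = aPt p := by
  unfold aPt bPt collS
  simp only
  rw [norm_sub_rev p.2.1 p.1, coe_neg_sphere]
  module

lemma energy_identity {d : ℕ} (p : Vel d × Vel d × Sph d) :
    ‖aPt p‖ ^ 2 + ‖bPt p‖ ^ 2 = ‖p.1‖ ^ 2 + ‖p.2.1‖ ^ 2 := by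
  have key : ∀ m w : Vel d, ‖m - w‖ ^ 2 + ‖m + w‖ ^ 2 = 2 * ‖m‖ ^ 2 + 2 * ‖w‖ ^ 2 := by
    intro m w
    rw [norm_sub_sq_real, norm_add_sq_real]
    ring
  calc ‖aPt p‖ ^ 2 + ‖bPt p‖ ^ 2
      = 2 * ‖(2:ℝ)⁻¹ • (p.1 + p.2.1)‖ ^ 2
        + 2 * ‖(‖p.1 - p.2.1‖ / 2) • (p.2.2 : Vel d)‖ ^ 2 := key _ _
    _ = 2 * ‖(2:ℝ)⁻¹ • (p.1 + p.2.1)‖ ^ 2 + 2 * ‖(2:ℝ)⁻¹ • (p.1 - p.2.1)‖ ^ 2 := by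
        congr 2
        rw [norm_smul, norm_smul, norm_coe_sphere, mul_one, Real.norm_eq_abs,
          Real.norm_eq_abs, abs_div, abs_of_nonneg (norm_nonneg _), abs_inv]
        norm_num
        ring
    _ = ‖p.1‖ ^ 2 + ‖p.2.1‖ ^ 2 := by
        have e1 : (2:ℝ)⁻¹ • (p.1 + p.2.1) + (2:ℝ)⁻¹ • (p.1 - p.2.1) = p.1 := by module
        have e2 : (2:ℝ)⁻¹ • (p.1 + p.2.1) - (2:ℝ)⁻¹ • (p.1 - p.2.1) = p.2.1 := by module
        have k2 := key ((2:ℝ)⁻¹ • (p.1 + p.2.1)) ((2:ℝ)⁻¹ • (p.1 - p.2.1))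
        rw [e1, e2] at k2
        linarith [k2]

lemma diag_ae {d : ℕ} [Nontrivial (Vel d)] :
    ∀ᵐ p : Vel d × Vel d × Sph d
      ∂((volume : Measure (Vel d)).prod ((volume : Measure (Vel d)).prod (sphereMeasure d))),
      p.1 ≠ p.2.1 := by
  rw [ae_iff]
  have hD : MeasurableSet {p : Vel d × Vel d × Sph d | ¬ p.1 ≠ p.2.1} := by
    simp only [not_not]
    exact (isClosed_eq continuous_fst (continuous_fst.comp continuous_snd)).measurableSet
  rw [Measure.prod_apply hD]
  have : ∀ v : Vel d,
      (((volume : Measure (Vel d)).prod (sphereMeasure d))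
        (Prod.mk v ⁻¹' {p : Vel d × Vel d × Sph d | ¬ p.1 ≠ p.2.1})) = 0 := by
    intro v
    have : (Prod.mk v ⁻¹' {p : Vel d × Vel d × Sph d | ¬ p.1 ≠ p.2.1})
        = ({v} : Set (Vel d)) ×ˢ (Set.univ : Set (Sph d)) := by
      ext q
      simp only [Set.mem_preimage, Set.mem_setOf_eq, not_not, Set.mem_prod,
        Set.mem_singleton_iff, Set.mem_univ, and_true]
      exact eq_comm
    rw [this, Measure.prod_prod]
    simp
  rw [lintegral_congr this, lintegral_zero]

/-- Conservation of kinetic energy by the Boltzmann collision operator: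
`∫ |v|² Q(f,f)(v) dv = 0`. -/
theorem collOp_conserves_energy
    (d : ℕ) (hd : 2 ≤ d) (B : ℝ → ℝ → ℝ) (hBmeas : Measurable (Function.uncurry B))
    (hBpos : ∀ x y, 0 ≤ B x y)
    (f : Vel d → ℝ) (hfmeas : Measurable f) (hfpos : ∀ v, 0 ≤ f v)
    (hint : Integrable
      (fun p : Vel d × Vel d × sphere (0 : Vel d) 1 =>
        B (⟪(p.2.2 : Vel d), p.1 - p.2.1⟫_ℝ / ‖p.1 - p.2.1‖) ‖p.1 - p.2.1‖ *
          f p.1 * f p.2.1 * (1 + ‖p.1‖ ^ 2 + ‖p.2.1‖ ^ 2))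
      ((volume : Measure (Vel d)).prod
        (((volume : Measure (Vel d))).prod (sphereMeasure d)))) :
    ∫ v : Vel d, ‖v‖ ^ 2 * collOp d B f f v = 0 := by
  classical
  haveI : Nontrivial (Vel d) := by
    have h0 : 0 < Module.finrank ℝ (Vel d) := by
      simp only [finrank_euclideanSpace, Fintype.card_fin]
      omega
    exact Module.nontrivial_of_finrank_pos h0
  set μ2 : Measure (Vel d × Sph d) :=
    (volume : Measure (Vel d)).prod (sphereMeasure d) with hμ2
  set μ3 : Measure (Vel d × Vel d × Sph d) :=
    (volume : Measure (Vel d)).prod ((volume : Measure (Vel d)).prod (sphereMeasure d)) with hμ3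
  set ψ : Vel d → ℝ := fun v => ‖v‖ ^ 2 with hψ
  set W : Vel d × Vel d × Sph d → ℝ :=
    fun p => Bker B p * (f (aPt p) * f (bPt p) - f p.2.1 * f p.1) with hW
  set G : Vel d × Vel d × Sph d → ℝ := fun p => Bker B p * (f (aPt p) * f (bPt p)) with hG
  set L : Vel d × Vel d × Sph d → ℝ := fun p => Bker B p * (f p.2.1 * f p.1) with hLdef
  -- measurability
  have hdiffm : Measurable fun p : Vel d × Vel d × Sph d => p.1 - p.2.1 :=
    measurable_fst.sub (measurable_fst.comp measurable_snd)
  have hBk : Measurable (Bker (d := d) B) := by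
    have heq : (Bker (d := d) B) = Function.uncurry B ∘
        (fun p : Vel d × Vel d × Sph d =>
          (⟪(p.2.2 : Vel d), p.1 - p.2.1⟫_ℝ / ‖p.1 - p.2.1‖, ‖p.1 - p.2.1‖)) := rfl
    rw [heq]
    exact hBmeas.comp
      (((((measurable_subtype_coe.comp (measurable_snd.comp measurable_snd)).inner
        hdiffm)).div hdiffm.norm).prodMk hdiffm.norm)
  have haPtc : Continuous (aPt (d := d)) := by
    unfold aPt
    fun_prop
  have hbPtc : Continuous (bPt (d := d)) := by
    unfold bPt
    fun_prop
  have haPt : Measurable (aPt (d := d)) := haPtc.measurable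
  have hbPt : Measurable (bPt (d := d)) := hbPtc.measurable
  have hψm : Measurable ψ := measurable_norm.pow_const 2
  have hGm : Measurable G := hBk.mul ((hfmeas.comp haPt).mul (hfmeas.comp hbPt))
  have hLm : Measurable L := hBk.mul
    ((hfmeas.comp (measurable_fst.comp measurable_snd)).mul (hfmeas.comp measurable_fst))
  have hWm : Measurable W := hBk.mul
    (((hfmeas.comp haPt).mul (hfmeas.comp hbPt)).sub
      ((hfmeas.comp (measurable_fst.comp measurable_snd)).mul (hfmeas.comp measurable_fst)))
  -- nonnegativity
  have hL0 : ∀ p, 0 ≤ L p := fun p =>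
    mul_nonneg (hBpos _ _) (mul_nonneg (hfpos _) (hfpos _))
  have hψ0 : ∀ v, 0 ≤ ψ v := fun v => sq_nonneg _
  -- the master integrability criterion
  have hIntC : ∀ c : Vel d × Vel d × Sph d → ℝ, Measurable c → (∀ p, 0 ≤ c p) →
      (∀ p, c p ≤ 1 + ψ p.1 + ψ p.2.1) → Integrable (fun p => c p * L p) μ3 := by
    intro c hcm hc0 hcle
    apply hint.mono' ((hcm.mul hLm).aestronglyMeasurable)
    filter_upwards with p
    rw [Real.norm_eq_abs, Pi.mul_apply, abs_of_nonneg (mul_nonneg (hc0 p) (hL0 p))]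
    calc c p * L p ≤ (1 + ψ p.1 + ψ p.2.1) * L p :=
          mul_le_mul_of_nonneg_right (hcle p) (hL0 p)
      _ = Bker B p * f p.1 * f p.2.1 * (1 + ‖p.1‖ ^ 2 + ‖p.2.1‖ ^ 2) := by
          simp only [hLdef, hψ]
          ring
  have hEψ : ∀ p : Vel d × Vel d × Sph d, ψ (aPt p) + ψ (bPt p) = ψ p.1 + ψ p.2.1 :=
    fun p => energy_identity p
  have J1 : Integrable (fun p => ψ p.1 * L p) μ3 :=
    hIntC _ (hψm.comp measurable_fst) (fun p => hψ0 _)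
      (fun p => by
        show ψ p.1 ≤ 1 + ψ p.1 + ψ p.2.1
        have h2 := hψ0 p.2.1
        linarith)
  have J2 : Integrable (fun p => ψ p.2.1 * L p) μ3 :=
    hIntC _ (hψm.comp (measurable_fst.comp measurable_snd)) (fun p => hψ0 _)
      (fun p => by
        show ψ p.2.1 ≤ 1 + ψ p.1 + ψ p.2.1
        have h2 := hψ0 p.1
        linarith)
  have J4a : Integrable (fun p => ψ (aPt p) * L p) μ3 :=
    hIntC _ (hψm.comp haPt) (fun p => hψ0 _)
      (fun p => by
        show ψ (aPt p) ≤ 1 + ψ p.1 + ψ p.2.1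
        have hE := hEψ p
        have h1 := hψ0 (bPt p)
        linarith)
  have J4b : Integrable (fun p => ψ (bPt p) * L p) μ3 :=
    hIntC _ (hψm.comp hbPt) (fun p => hψ0 _)
      (fun p => by
        show ψ (bPt p) ≤ 1 + ψ p.1 + ψ p.2.1
        have hE := hEψ p
        have h1 := hψ0 (aPt p)
        linarith)
  have J0 : Integrable L μ3 := by
    have := hIntC (fun _ => 1) measurable_const (fun _ => zero_le_one)
      (fun p => by
        show (1:ℝ) ≤ 1 + ψ p.1 + ψ p.2.1
        have := hψ0 p.1; have := hψ0 p.2.1; linarith)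
    simpa using this
  -- substitution principles
  have subT : ∀ g : Vel d × Vel d × Sph d → ℝ, AEStronglyMeasurable g μ3 →
      ∫ p, g (collT p) ∂μ3 = ∫ p, g p ∂μ3 := by
    intro g hg
    rw [hμ3] at hg ⊢
    have hT := measurePreserving_collT d
    rw [← hT.map_eq] at hg
    have h := MeasureTheory.integral_map hT.aemeasurable hg
    rw [hT.map_eq] at h
    exact h.symm
  have subS : ∀ g : Vel d × Vel d × Sph d → ℝ, AEStronglyMeasurable g μ3 →
      ∫ p, g (collS p) ∂μ3 = ∫ p, g p ∂μ3 := by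
    intro g hg
    rw [hμ3] at hg ⊢
    have hT := measurePreserving_collS d
    rw [← hT.map_eq] at hg
    have h := MeasureTheory.integral_map hT.aemeasurable hg
    rw [hT.map_eq] at h
    exact h.symm
  have intT : ∀ g : Vel d × Vel d × Sph d → ℝ, AEStronglyMeasurable g μ3 →
      Integrable g μ3 → Integrable (g ∘ collT) μ3 := fun g hg hgi =>
    ((measurePreserving_collT d).integrable_comp hg).2 hgi
  -- pointwise composition identities
  have hLcollT : ∀ᵐ p ∂μ3, L (collT p) = G p := by
    filter_upwards [diag_ae] with p hp
    simp only [hLdef, hG]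
    rw [Bker_collT B p hp, collT_snd_fst, collT_fst]
  have hGint : Integrable G μ3 := by
    have h1 : Integrable (L ∘ collT) μ3 := intT L hLm.aestronglyMeasurable J0
    exact h1.congr hLcollT
  have hWint : Integrable W μ3 := by
    have h1 : Integrable (fun p => G p - L p) μ3 := hGint.sub J0
    apply h1.congr
    filter_upwards with p
    simp only [hW, hG, hLdef]
    ring
  -- the four integral identities
  have E1 : ∫ p, ψ p.1 * G p ∂μ3 = ∫ p, ψ (bPt p) * L p ∂μ3 := by
    have hmeas : AEStronglyMeasurable (fun p => ψ (bPt p) * L p) μ3 :=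
      ((hψm.comp hbPt).mul hLm).aestronglyMeasurable
    have h := subT (fun p => ψ (bPt p) * L p) hmeas
    rw [← h]
    apply integral_congr_ae
    filter_upwards [diag_ae] with p hp
    symm
    show ψ (bPt (collT p)) * L (collT p) = ψ p.1 * G p
    rw [bPt_collT p hp]
    congr 1
    simp only [hLdef, hG]
    rw [Bker_collT B p hp, collT_snd_fst, collT_fst]
  have E2 : ∫ p, ψ p.2.1 * G p ∂μ3 = ∫ p, ψ (aPt p) * L p ∂μ3 := by
    have hmeas : AEStronglyMeasurable (fun p => ψ (aPt p) * L p) μ3 :=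
      ((hψm.comp haPt).mul hLm).aestronglyMeasurable
    have h := subT (fun p => ψ (aPt p) * L p) hmeas
    rw [← h]
    apply integral_congr_ae
    filter_upwards [diag_ae] with p hp
    symm
    show ψ (aPt (collT p)) * L (collT p) = ψ p.2.1 * G p
    rw [aPt_collT p hp]
    congr 1
    simp only [hLdef, hG]
    rw [Bker_collT B p hp, collT_snd_fst, collT_fst]
  have E3 : ∫ p, ψ p.2.1 * G p ∂μ3 = ∫ p, ψ p.1 * G p ∂μ3 := by
    have hmeas : AEStronglyMeasurable (fun p => ψ p.1 * G p) μ3 :=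
      ((hψm.comp measurable_fst).mul hGm).aestronglyMeasurable
    have h := subS (fun p => ψ p.1 * G p) hmeas
    rw [← h]
    apply integral_congr_ae
    filter_upwards with p
    symm
    show ψ ((collS p).1) * G (collS p) = ψ p.2.1 * G p
    have h5 : (collS p).1 = p.2.1 := rfl
    rw [h5]
    congr 1
    simp only [hG]
    rw [Bker_collS B p, aPt_collS p, bPt_collS p]
    ring
  have E4 : ∫ p, ψ p.2.1 * L p ∂μ3 = ∫ p, ψ p.1 * L p ∂μ3 := by
    have hmeas : AEStronglyMeasurable (fun p => ψ p.1 * L p) μ3 :=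
      ((hψm.comp measurable_fst).mul hLm).aestronglyMeasurable
    have h := subS (fun p => ψ p.1 * L p) hmeas
    rw [← h]
    apply integral_congr_ae
    filter_upwards with p
    symm
    show ψ ((collS p).1) * L (collS p) = ψ p.2.1 * L p
    have h5 : (collS p).1 = p.2.1 := rfl
    rw [h5]
    congr 1
    simp only [hLdef]
    rw [Bker_collS B p]
    show Bker B p * (f p.1 * f p.2.1) = Bker B p * (f p.2.1 * f p.1)
    ring
  -- combine: ∫ ψ₁ G = ∫ ψ₁ L
  have key : ∫ p, ψ p.1 * G p ∂μ3 = ∫ p, ψ p.1 * L p ∂μ3 := by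
    have hsumL : ∫ p, ψ (bPt p) * L p ∂μ3 + ∫ p, ψ (aPt p) * L p ∂μ3
        = ∫ p, ψ p.1 * L p ∂μ3 + ∫ p, ψ p.2.1 * L p ∂μ3 := by
      rw [← integral_add J4b J4a, ← integral_add J1 J2]
      apply integral_congr_ae
      filter_upwards with p
      show ψ (bPt p) * L p + ψ (aPt p) * L p = ψ p.1 * L p + ψ p.2.1 * L p
      have hE := hEψ p
      linear_combination L p * hE
    have h1 := E1
    have h2 := E2
    have h3 := E3
    have h4 := E4
    linarith
  -- Fubini: reduce the statement to the product-space integral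
  have J5 : Integrable (fun p => ψ p.1 * G p) μ3 := by
    apply (intT (fun p => ψ (bPt p) * L p)
      (((hψm.comp hbPt).mul hLm).aestronglyMeasurable) J4b).congr
    filter_upwards [diag_ae] with p hp
    show ψ (bPt (collT p)) * L (collT p) = ψ p.1 * G p
    rw [bPt_collT p hp]
    congr 1
    simp only [hLdef, hG]
    rw [Bker_collT B p hp, collT_snd_fst, collT_fst]
  have hHint : Integrable (fun p => ψ p.1 * W p) μ3 := by
    apply (J5.sub J1).congr
    filter_upwards with p
    simp only [Pi.sub_apply, hψ, hW, hG, hLdef]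
    ring
  have hsub : ∫ p, ψ p.1 * W p ∂μ3 = 0 := by
    have h1 : ∫ p, ψ p.1 * W p ∂μ3
        = ∫ p, (ψ p.1 * G p - ψ p.1 * L p) ∂μ3 := by
      apply integral_congr_ae
      filter_upwards with p
      simp only [hW, hG, hLdef]
      ring
    rw [h1, integral_sub J5 J1, key, sub_self]
  -- identify the LHS with ∫ ψ p.1 * W p dμ3
  have hLHS : ∫ v : Vel d, ψ v * collOp d B f f v = ∫ p, ψ p.1 * W p ∂μ3 := by
    rw [hμ3, integral_prod _ hHint]
    apply integral_congr_ae
    filter_upwards [hWint.prod_right_ae] with v hv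
    have h1 : ∫ q, W (v, q) ∂((volume : Measure (Vel d)).prod (sphereMeasure d))
        = ∫ vs, ∫ σ, W (v, (vs, σ)) ∂(sphereMeasure d) ∂volume := integral_prod _ hv
    have h2 : collOp d B f f v
        = ∫ vs, ∫ σ, W (v, (vs, σ)) ∂(sphereMeasure d) ∂volume := rfl
    calc ψ v * collOp d B f f v
        = ψ v * ∫ q, W (v, q) ∂((volume : Measure (Vel d)).prod (sphereMeasure d)) := by
          rw [h2, h1]
      _ = ∫ q, ψ v * W (v, q) ∂((volume : Measure (Vel d)).prod (sphereMeasure d)) :=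
          (integral_const_mul _ _).symm
      _ = ∫ q : Vel d × Sph d, ψ (v, q).1 * W (v, q)
            ∂((volume : Measure (Vel d)).prod (sphereMeasure d)) := rfl
  rw [hLHS, hsub]
end
end
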